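/- Let m, n be positive integers, r = min(m,n), and K a positive integer. Let d ∈ ℝ^K with d_k ≥ 0, α_k ∈ ℝ^m with ‖α_k‖₂ ≤ 1, and β_k ∈ ℝ^n with ‖β_k‖₂ ≤ 1 for all k ∈ {1,…,K}. Then there exist σ ∈ ℝ^r with σ_k ≥ 0, an orthonormal family (u_1,…,u_r) in ℝ^m, and an orthonormal family (v_1,…,v_r) in ℝ^n such that Σ_{k=1}^r σ_k u_k v_kᵀ = Σ_{k=1}^K d_k α_k β_kᵀ and Σ_{k=1}^r σ_k ≤ Σ_{k=1}^K d_k. (Replacement lemma: any feasible point of P2 can be replaced by an SVD-form feasible point with objective value at least as small.) -/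

import Mathlib

open scoped BigOperators

/-- The Euclidean (ℓ²) norm of a vector in `ℝ^m`. -/
noncomputable def l2norm {m : ℕ} (x : Fin m → ℝ) : ℝ := Real.sqrt (∑ i, x i ^ 2)

/-- `∑ k, d k • (α k) (β k)ᵀ`, a sum of scaled rank-one matrices. -/
noncomputable def rankOneSum {m n K : ℕ} (d : Fin K → ℝ) (α : Fin K → Fin m → ℝ)
    (β : Fin K → Fin n → ℝ) : Matrix (Fin m) (Fin n) ℝ :=
  ∑ k, d k • Matrix.vecMulVec (α k) (β k)

/-- A family of vectors of `ℝ^m` is orthonormal when pairwise Euclidean inner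
products are `1` on the diagonal and `0` off the diagonal. -/
def OrthonormalFamily {r m : ℕ} (u : Fin r → Fin m → ℝ) : Prop :=
  ∀ i j, (∑ t, u i t * u j t) = if i = j then 1 else 0

open Matrix

-- helper lemmas
lemma dot_eq_inner {n : ℕ} (x y : EuclideanSpace ℝ (Fin n)) :
    (inner ℝ x y : ℝ) = ∑ t, x t * y t := by
  simp [PiLp.inner_apply, RCLike.inner_apply, mul_comm]

def toE {N : ℕ} (x : Fin N → ℝ) : EuclideanSpace ℝ (Fin N) := WithLp.toLp 2 x

lemma toE_apply {N : ℕ} (x : Fin N → ℝ) (t : Fin N) : toE x t = x t := rfl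

lemma ext_of_mulVec {m n : ℕ} {A B : Matrix (Fin m) (Fin n) ℝ}
    (h : ∀ x, A *ᵥ x = B *ᵥ x) : A = B := by
  ext i j
  have := congrFun (h (Pi.single j 1)) i
  simpa [Matrix.mulVec_single] using this

lemma vecMulVec_mulVec' {m n : ℕ} (u : Fin m → ℝ) (v : Fin n → ℝ) (x : Fin n → ℝ) :
    Matrix.vecMulVec u v *ᵥ x = (v ⬝ᵥ x) • u := by
  ext i
  simp only [Matrix.vecMulVec_apply, Matrix.mulVec, dotProduct, Pi.smul_apply,
    smul_eq_mul, Finset.sum_mul]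
  exact Finset.sum_congr rfl fun t _ => by ring

lemma rankOneSum_mulVec {m n K : ℕ} (d : Fin K → ℝ) (α : Fin K → Fin m → ℝ)
    (β : Fin K → Fin n → ℝ) (x : Fin n → ℝ) :
    rankOneSum d α β *ᵥ x = ∑ k, (d k * (β k ⬝ᵥ x)) • α k := by
  ext i
  simp only [rankOneSum, Matrix.mulVec, dotProduct, Finset.sum_apply, Pi.smul_apply,
    Matrix.sum_apply, Matrix.smul_apply, Matrix.vecMulVec_apply, smul_eq_mul,
    Finset.sum_mul, Finset.mul_sum]
  rw [Finset.sum_comm]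
  exact Finset.sum_congr rfl fun k _ => Finset.sum_congr rfl fun t _ => by ring

lemma svd_core {m n : ℕ} (A : Matrix (Fin m) (Fin n) ℝ) :
    ∃ (σ : Fin n → ℝ) (u : Fin n → Fin m → ℝ) (v : Fin n → Fin n → ℝ),
      (∀ j, 0 ≤ σ j) ∧
      (∀ i j, (∑ t, v i t * v j t) = if i = j then 1 else 0) ∧
      (∀ i j, σ i ≠ 0 → σ j ≠ 0 → (∑ t, u i t * u j t) = if i = j then 1 else 0) ∧
      (∀ j, A *ᵥ v j = σ j • u j) ∧
      A = ∑ j, σ j • Matrix.vecMulVec (u j) (v j) := by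
  classical
  have hH : (Aᵀ * A).IsHermitian := by
    simpa [Matrix.conjTranspose_eq_transpose_of_trivial] using Matrix.isHermitian_conjTranspose_mul_self A
  set V := hH.eigenvectorBasis with hV
  set μ := hH.eigenvalues with hμ
  have hVmul : ∀ j, (Aᵀ * A) *ᵥ (V j) = μ j • (V j) := fun j => hH.mulVec_eigenvectorBasis j
  have hVd : ∀ i j, (V i : Fin n → ℝ) ⬝ᵥ (V j : Fin n → ℝ) = if i = j then 1 else 0 := by
    intro i j
    have h1 := orthonormal_iff_ite.mp V.orthonormal i j
    have h2 := dot_eq_inner (V i) (V j)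
    rw [h1] at h2
    simpa [dotProduct] using h2.symm
  have key : ∀ i j, (A *ᵥ V i) ⬝ᵥ (A *ᵥ V j) = if i = j then μ j else 0 := by
    intro i j
    calc (A *ᵥ V i) ⬝ᵥ (A *ᵥ V j) = ((V i : Fin n → ℝ) ᵥ* Aᵀ) ⬝ᵥ (A *ᵥ V j) := by
          rw [Matrix.vecMul_transpose]
      _ = (V i : Fin n → ℝ) ⬝ᵥ ((Aᵀ * A) *ᵥ V j) := by
          rw [Matrix.dotProduct_mulVec, Matrix.vecMul_vecMul, Matrix.dotProduct_mulVec]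
      _ = (V i : Fin n → ℝ) ⬝ᵥ (μ j • (V j : Fin n → ℝ)) := by rw [hVmul j]
      _ = μ j * ((V i : Fin n → ℝ) ⬝ᵥ (V j : Fin n → ℝ)) := by
          rw [dotProduct_smul]; rfl
      _ = if i = j then μ j else 0 := by rw [hVd i j]; split <;> ring
  have hμ0 : ∀ j, 0 ≤ μ j := by
    intro j
    have := key j j
    simp only [eq_self_iff_true, if_true] at this
    rw [← this]
    exact Finset.sum_nonneg fun t _ => mul_self_nonneg _
  set σ : Fin n → ℝ := fun j => Real.sqrt (μ j) with hσ
  have hσ2 : ∀ j, σ j * σ j = μ j := fun j => Real.mul_self_sqrt (hμ0 j)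
  set u : Fin n → Fin m → ℝ :=
    fun j => if σ j = 0 then 0 else (σ j)⁻¹ • (A *ᵥ V j) with hu
  have hAv : ∀ j, A *ᵥ (V j) = σ j • u j := by
    intro j
    by_cases h : σ j = 0
    · have hμj : μ j = 0 := by rw [← hσ2 j, h, mul_zero]
      have hz : A *ᵥ (V j) = 0 := by
        have hk := key j j
        simp only [eq_self_iff_true, if_true, hμj] at hk
        funext t
        have := (Finset.sum_eq_zero_iff_of_nonneg
          (fun t _ => mul_self_nonneg ((A *ᵥ V j) t))).mp hk t (Finset.mem_univ t)
        exact mul_self_eq_zero.mp this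
      rw [hz, hu]
      simp [h]
    · rw [hu]
      simp only [if_neg h]
      rw [smul_inv_smul₀ h]
  have huon : ∀ i j, σ i ≠ 0 → σ j ≠ 0 → (∑ t, u i t * u j t) = if i = j then 1 else 0 := by
    intro i j hi hj
    have : (∑ t, u i t * u j t) = u i ⬝ᵥ u j := rfl
    rw [this, hu]
    simp only [if_neg hi, if_neg hj]
    rw [smul_dotProduct, dotProduct_smul, key i j]
    rcases eq_or_ne i j with rfl | h
    · simp only [eq_self_iff_true, if_true, smul_eq_mul]
      field_simp
      linarith [hσ2 i]
    · simp [h]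
  have hVd' : ∀ i j, (∑ t, (V i : Fin n → ℝ) t * (V j : Fin n → ℝ) t)
      = if i = j then 1 else 0 := fun i j => hVd i j
  refine ⟨σ, u, fun j => (V j : Fin n → ℝ), fun j => Real.sqrt_nonneg _, hVd', huon,
    fun j => hAv j, ?_⟩
  apply ext_of_mulVec
  intro x
  have hx : (∑ j, (inner ℝ (V j) (toE x) : ℝ) • V j)
      = toE x := V.sum_repr' (toE x)
  have hsum : rankOneSum σ u (fun j => (V j : Fin n → ℝ)) *ᵥ x
      = ∑ j, (σ j * ((V j : Fin n → ℝ) ⬝ᵥ x)) • u j := rankOneSum_mulVec _ _ _ x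
  rw [rankOneSum] at hsum
  rw [hsum]
  calc A *ᵥ x = A.mulVecLin (∑ j, (inner ℝ (V j) (toE x) : ℝ) • (V j : Fin n → ℝ)) := by
        have := congrArg WithLp.ofLp hx
        simp only [WithLp.ofLp_sum, WithLp.ofLp_smul] at this
        rw [this]; rfl
    _ = ∑ j, (inner ℝ (V j) (toE x) : ℝ) • (A *ᵥ (V j)) := by
        rw [map_sum]
        exact Finset.sum_congr rfl fun j _ => by
          rw [LinearMap.map_smul, Matrix.mulVecLin_apply]
    _ = ∑ j, (σ j * ((V j : Fin n → ℝ) ⬝ᵥ x)) • u j := by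
        refine Finset.sum_congr rfl fun j _ => ?_
        rw [hAv j, dot_eq_inner, smul_smul, mul_comm (σ j)]
        rfl

lemma extend_family {r m : ℕ} (hrm : r ≤ m) {ι : Type*} [Fintype ι]
    (e : ι ↪ Fin r) (w : ι → EuclideanSpace ℝ (Fin m))
    (hw : Orthonormal ℝ w) :
    ∃ u : Fin r → EuclideanSpace ℝ (Fin m),
      Orthonormal ℝ u ∧ ∀ i, u (e i) = w i := by
  classical
  let f : Fin r ↪ Fin m := Fin.castLEEmb hrm
  let g : ι ↪ Fin m := e.trans f
  let W : Fin m → EuclideanSpace ℝ (Fin m) := fun t =>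
    if h : ∃ i, g i = t then w h.choose else 0
  have hWg : ∀ i, W (g i) = w i := by
    intro i
    have h : ∃ i', g i' = g i := ⟨i, rfl⟩
    simp only [W, dif_pos h]
    exact congrArg w (g.injective h.choose_spec)
  have hres : Orthonormal ℝ ((Set.range g).restrict W) := by
    rw [orthonormal_iff_ite]
    intro a b
    obtain ⟨i, hi⟩ := Set.mem_range.mp a.2
    obtain ⟨i', hi'⟩ := Set.mem_range.mp b.2
    simp only [Set.restrict_apply, Subtype.ext_iff]
    show inner ℝ (W (a : Fin m)) (W (b : Fin m)) = _
    rw [← hi, ← hi', hWg, hWg]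
    rw [orthonormal_iff_ite.mp hw i i']
    simp [Subtype.ext_iff, g.injective.eq_iff]
  obtain ⟨b, hb⟩ := hres.exists_orthonormalBasis_extension_of_card_eq
    (by simp [finrank_euclideanSpace])
  refine ⟨fun k => b (f k), b.orthonormal.comp _ f.injective, fun i => ?_⟩
  have := hb (g i) ⟨i, rfl⟩
  exact this.trans (hWg i)

lemma bessel_bound {N : ℕ} {ι : Type*} [Fintype ι] (w : ι → EuclideanSpace ℝ (Fin N))
    (hw : Orthonormal ℝ w) (x : Fin N → ℝ) (hx : l2norm x ≤ 1) :
    ∑ i, ((w i : Fin N → ℝ) ⬝ᵥ x) ^ 2 ≤ 1 := by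
  have hb := hw.sum_inner_products_le (𝕜 := ℝ) (toE x) (s := Finset.univ)
  have hnorm : ‖toE x‖ = l2norm x := by
    rw [EuclideanSpace.norm_eq]
    simp [toE, l2norm, Real.norm_eq_abs, sq_abs]
  have h1 : ∀ i, ‖(inner ℝ (w i) (toE x) : ℝ)‖ ^ 2
      = ((w i : Fin N → ℝ) ⬝ᵥ x) ^ 2 := by
    intro i
    rw [Real.norm_eq_abs, sq_abs, dot_eq_inner]
    rfl
  have hl2 : 0 ≤ l2norm x := Real.sqrt_nonneg _
  calc ∑ i, ((w i : Fin N → ℝ) ⬝ᵥ x) ^ 2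
      = ∑ i, ‖(inner ℝ (w i) (toE x) : ℝ)‖ ^ 2 :=
        Finset.sum_congr rfl fun i _ => (h1 i).symm
    _ ≤ ‖toE x‖ ^ 2 := hb
    _ ≤ 1 := by rw [hnorm]; nlinarith


/-- Replacement lemma: any feasible point of P2 can be replaced by an SVD-form
feasible point with objective value at least as small. -/
theorem svd_replacement_lemma
    (m n K : ℕ) (hm : 0 < m) (hn : 0 < n) (hK : 0 < K) (r : ℕ) (hr : r = min m n)
    (d : Fin K → ℝ) (α : Fin K → Fin m → ℝ) (β : Fin K → Fin n → ℝ)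
    (hd : ∀ k, 0 ≤ d k) (hα : ∀ k, l2norm (α k) ≤ 1) (hβ : ∀ k, l2norm (β k) ≤ 1) :
    ∃ (σ : Fin r → ℝ) (u : Fin r → Fin m → ℝ) (v : Fin r → Fin n → ℝ),
      (∀ k, 0 ≤ σ k) ∧ OrthonormalFamily u ∧ OrthonormalFamily v ∧
      rankOneSum σ u v = rankOneSum d α β ∧
      (∑ k, σ k) ≤ ∑ k, d k := by
  classical
  have hrm : r ≤ m := hr ▸ min_le_left m n
  have hrn : r ≤ n := hr ▸ min_le_right m n
  set A : Matrix (Fin m) (Fin n) ℝ := rankOneSum d α β with hA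
  obtain ⟨σ₀, u₀, v₀, hσ0, hv0, hu0, hAv, hAeq⟩ := svd_core A
  set S : Finset (Fin n) := Finset.univ.filter (fun j => σ₀ j ≠ 0) with hS
  have hmemS : ∀ j : Fin n, j ∈ S ↔ σ₀ j ≠ 0 := by
    intro j; simp [hS]
  -- orthonormal subfamilies
  have honu : Orthonormal ℝ (fun i : ↥S => toE (u₀ (i : Fin n))) := by
    rw [orthonormal_iff_ite]
    intro i j
    rw [dot_eq_inner]
    simp only [toE_apply]
    rw [hu0 i j ((hmemS i).mp i.2) ((hmemS j).mp j.2)]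
    simp only [Subtype.ext_iff]
  have honv : Orthonormal ℝ (fun i : ↥S => toE (v₀ (i : Fin n))) := by
    rw [orthonormal_iff_ite]
    intro i j
    rw [dot_eq_inner]
    simp only [toE_apply]
    rw [hv0 i j]
    simp only [Subtype.ext_iff]
  -- cardinality
  have hcard_m : Fintype.card ↥S ≤ m := by
    have := honu.linearIndependent.fintype_card_le_finrank
    simpa [finrank_euclideanSpace] using this
  have hcard_n : Fintype.card ↥S ≤ n := by
    rw [Fintype.card_coe]
    simpa using Finset.card_le_univ S
  have hcard_r : Fintype.card ↥S ≤ r := by omega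
  obtain ⟨e⟩ : Nonempty (↥S ↪ Fin r) :=
    Function.Embedding.nonempty_of_card_le (by simpa using hcard_r)
  obtain ⟨u', hu'on, hu'e⟩ := extend_family hrm e (fun i : ↥S => toE (u₀ (i : Fin n))) honu
  obtain ⟨v', hv'on, hv'e⟩ := extend_family hrn e (fun i : ↥S => toE (v₀ (i : Fin n))) honv
  set σ' : Fin r → ℝ := fun k => if h : ∃ i : ↥S, e i = k then σ₀ (h.choose : Fin n) else 0
    with hσ'
  have hσ'e : ∀ i : ↥S, σ' (e i) = σ₀ (i : Fin n) := by
    intro i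
    have h : ∃ i' : ↥S, e i' = e i := ⟨i, rfl⟩
    simp only [hσ', dif_pos h]
    exact congrArg σ₀ (congrArg _ (e.injective h.choose_spec))
  have hσ'0 : ∀ k, (¬ ∃ i : ↥S, e i = k) → σ' k = 0 := by
    intro k h; simp only [hσ', dif_neg h]
  have hσ'nonneg : ∀ k, 0 ≤ σ' k := by
    intro k
    by_cases h : ∃ i : ↥S, e i = k
    · simp only [hσ', dif_pos h]; exact hσ0 _
    · rw [hσ'0 k h]
  -- sum over Fin r reduces to sum over S
  have hsum_red : ∀ (M : Type) [AddCommMonoid M] [Module ℝ M]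
      (F : ℝ → (Fin m → ℝ) → (Fin n → ℝ) → M),
      (∀ u v, F 0 u v = 0) →
      (∑ k, F (σ' k) (u' k) (v' k)) = ∑ j ∈ S, F (σ₀ j) (u₀ j) (v₀ j) := by
    intro M _ _ F hF0
    have h1 : (∑ k, F (σ' k) (u' k) (v' k))
        = ∑ k ∈ Finset.univ.image (fun i : ↥S => e i), F (σ' k) (u' k) (v' k) := by
      refine (Finset.sum_subset (Finset.subset_univ _) ?_).symm
      intro k _ hk
      have : ¬ ∃ i : ↥S, e i = k := by
        intro ⟨i, hi⟩
        exact hk (Finset.mem_image.mpr ⟨i, Finset.mem_univ i, hi⟩)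
      rw [hσ'0 k this, hF0]
    rw [h1, Finset.sum_image (fun i _ j _ h => e.injective h)]
    have h2 : ∀ i : ↥S, F (σ' (e i)) (u' (e i)) (v' (e i))
        = F (σ₀ (i : Fin n)) (u₀ (i : Fin n)) (v₀ (i : Fin n)) := by
      intro i
      rw [hσ'e i, hu'e i, hv'e i]
      rfl
    rw [Finset.sum_congr rfl fun i _ => h2 i]
    exact Finset.sum_coe_sort S (fun j => F (σ₀ j) (u₀ j) (v₀ j))
  -- OrthonormalFamily from Orthonormal
  have hOF : ∀ {N : ℕ} (w : Fin r → EuclideanSpace ℝ (Fin N)),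
      Orthonormal ℝ w → OrthonormalFamily (fun k => (w k : Fin N → ℝ)) := by
    intro N w hw i j
    rw [← dot_eq_inner (w i) (w j)]
    exact orthonormal_iff_ite.mp hw i j
  refine ⟨σ', fun k => u' k, fun k => v' k, hσ'nonneg, hOF u' hu'on, hOF v' hv'on, ?_, ?_⟩
  · -- matrix equality
    have h1 : rankOneSum σ' (fun k => (u' k : Fin m → ℝ)) (fun k => (v' k : Fin n → ℝ))
        = ∑ j ∈ S, σ₀ j • Matrix.vecMulVec (u₀ j) (v₀ j) := by
      rw [rankOneSum]
      exact hsum_red _ (fun s u v => s • Matrix.vecMulVec u v) (fun u v => zero_smul _ _)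
    rw [h1, hAeq]
    refine Finset.sum_subset (Finset.subset_univ _) ?_
    intro j _ hj
    have : σ₀ j = 0 := by
      by_contra h
      exact hj ((hmemS j).mpr h)
    rw [this, zero_smul]
  · -- objective bound
    have h1 : (∑ k, σ' k) = ∑ j ∈ S, σ₀ j := by
      have := hsum_red ℝ (fun s _ _ => s) (fun _ _ => rfl)
      simpa using this
    rw [h1]
    -- σ₀ j = u₀ j ⬝ᵥ (A *ᵥ v₀ j) for j ∈ S
    have hσval : ∀ j ∈ S, σ₀ j = ∑ k, d k * ((u₀ j ⬝ᵥ α k) * (v₀ j ⬝ᵥ β k)) := by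
      intro j hj
      have hj' : σ₀ j ≠ 0 := (hmemS j).mp hj
      have h2 : u₀ j ⬝ᵥ (A *ᵥ v₀ j) = σ₀ j := by
        rw [hAv j, dotProduct_smul]
        have : u₀ j ⬝ᵥ u₀ j = 1 := by
          have := hu0 j j hj' hj'
          simpa [dotProduct] using this
        rw [smul_eq_mul, this, mul_one]
      have hds : u₀ j ⬝ᵥ (∑ k, (d k * (β k ⬝ᵥ v₀ j)) • α k)
          = ∑ k, u₀ j ⬝ᵥ ((d k * (β k ⬝ᵥ v₀ j)) • α k) := by
        simp only [dotProduct, Finset.sum_apply, Finset.mul_sum]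
        exact Finset.sum_comm
      rw [← h2, hA, rankOneSum_mulVec, hds]
      refine Finset.sum_congr rfl fun k _ => ?_
      rw [dotProduct_smul, smul_eq_mul]
      rw [dotProduct_comm (u₀ j) (α k), dotProduct_comm (β k) (v₀ j)]
      ring
    rw [Finset.sum_congr rfl hσval, Finset.sum_comm]
    refine Finset.sum_le_sum fun k _ => ?_
    rw [← Finset.mul_sum]
    have hbu : (∑ j ∈ S, (u₀ j ⬝ᵥ α k) ^ 2) ≤ 1 := by
      have h : (∑ i : ↥S, (u₀ (i : Fin n) ⬝ᵥ α k) ^ 2) ≤ 1 :=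
        bessel_bound (fun i : ↥S => toE (u₀ (i : Fin n))) honu (α k) (hα k)
      rwa [Finset.sum_coe_sort S (fun j => (u₀ j ⬝ᵥ α k) ^ 2)] at h
    have hbv : (∑ j ∈ S, (v₀ j ⬝ᵥ β k) ^ 2) ≤ 1 := by
      have h : (∑ i : ↥S, (v₀ (i : Fin n) ⬝ᵥ β k) ^ 2) ≤ 1 :=
        bessel_bound (fun i : ↥S => toE (v₀ (i : Fin n))) honv (β k) (hβ k)
      rwa [Finset.sum_coe_sort S (fun j => (v₀ j ⬝ᵥ β k) ^ 2)] at h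
    have hcs := Real.sum_mul_le_sqrt_mul_sqrt S (fun j => u₀ j ⬝ᵥ α k) (fun j => v₀ j ⬝ᵥ β k)
    have h1 : Real.sqrt (∑ j ∈ S, (u₀ j ⬝ᵥ α k) ^ 2) ≤ 1 := Real.sqrt_le_one.mpr hbu
    have h2 : Real.sqrt (∑ j ∈ S, (v₀ j ⬝ᵥ β k) ^ 2) ≤ 1 := Real.sqrt_le_one.mpr hbv
    have h3 : (∑ j ∈ S, (u₀ j ⬝ᵥ α k) * (v₀ j ⬝ᵥ β k)) ≤ 1 := by
      refine hcs.trans ?_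
      nlinarith [Real.sqrt_nonneg (∑ j ∈ S, (u₀ j ⬝ᵥ α k) ^ 2),
        Real.sqrt_nonneg (∑ j ∈ S, (v₀ j ⬝ᵥ β k) ^ 2)]
    calc d k * ∑ j ∈ S, (u₀ j ⬝ᵥ α k) * (v₀ j ⬝ᵥ β k) ≤ d k * 1 :=
          mul_le_mul_of_nonneg_left h3 (hd k)
      _ = d k := mul_one _
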